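/- Let H : ℝ^d → ℝ^d and ε ≥ 0. Then H satisfies ‖(H - I)(x) - (H - I)(y)‖² ≤ ε²‖x - y‖² for all x, y if and only if (1/(1+2ε))(2H - I) is 2ε/(1+2ε)-averaged. -/

import Mathlib

open scoped RealInnerProductSpace

/-- θ-averagedness, characterized by the inner-product inequality
(Proposition 4.35 of Bauschke–Combettes). -/
def Averaged {d : ℕ} (θ : ℝ) (G : EuclideanSpace ℝ (Fin d) → EuclideanSpace ℝ (Fin d)) : Prop :=
  ∀ x y, ‖G x - G y‖ ^ 2 + (1 - 2 * θ) * ‖x - y‖ ^ 2 ≤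
    2 * (1 - θ) * ⟪G x - G y, x - y⟫

lemma aux_iff {d : ℕ} (ε : ℝ) (hc : (0:ℝ) < 1 + 2 * ε)
    (w v : EuclideanSpace ℝ (Fin d)) :
    ‖w‖ ^ 2 ≤ ε ^ 2 * ‖v‖ ^ 2 ↔
      ‖(1 / (1 + 2 * ε)) • ((2:ℝ) • w + v)‖ ^ 2
        + (1 - 2 * (2 * ε / (1 + 2 * ε))) * ‖v‖ ^ 2 ≤
      2 * (1 - 2 * ε / (1 + 2 * ε)) *
        ⟪(1 / (1 + 2 * ε)) • ((2:ℝ) • w + v), v⟫ := by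
  set c := 1 + 2 * ε with hcdef
  have h1 : ‖(1 / c) • ((2:ℝ) • w + v)‖ ^ 2 = (1 / c) ^ 2 * ‖(2:ℝ) • w + v‖ ^ 2 := by
    rw [norm_smul, Real.norm_eq_abs, abs_of_pos (by positivity)]
    ring
  have h2 : ‖(2:ℝ) • w + v‖ ^ 2 = 4 * ‖w‖ ^ 2 + 4 * ⟪w, v⟫ + ‖v‖ ^ 2 := by
    rw [@norm_add_sq_real, norm_smul, real_inner_smul_left, Real.norm_eq_abs]
    norm_num
    ring
  have h3 : ⟪(1 / c) • ((2:ℝ) • w + v), v⟫ = (1 / c) * (2 * ⟪w, v⟫ + ‖v‖ ^ 2) := by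
    rw [real_inner_smul_left, inner_add_left, real_inner_smul_left,
      real_inner_self_eq_norm_sq]
  rw [h1, h2, h3]
  set W := ‖w‖ ^ 2
  set V := ‖v‖ ^ 2
  set P := ⟪w, v⟫
  have hne : c ≠ 0 := ne_of_gt hc
  have hEq : 2 * (1 - 2 * ε / c) * (1 / c * (2 * P + V))
      - ((1 / c) ^ 2 * (4 * W + 4 * P + V) + (1 - 2 * (2 * ε / c)) * V)
      = (4 / c ^ 2) * (ε ^ 2 * V - W) := by
    rw [hcdef]
    field_simp [(show (0:ℝ) < 1 + 2 * ε by linarith).ne']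
    ring
  have h4 : (0:ℝ) < 4 / c ^ 2 := by positivity
  constructor
  · intro h
    have h5 : 0 ≤ (4 / c ^ 2) * (ε ^ 2 * V - W) :=
      mul_nonneg (le_of_lt h4) (by linarith)
    linarith [hEq]
  · intro h
    have h5 : 0 ≤ (4 / c ^ 2) * (ε ^ 2 * V - W) := by linarith [hEq]
    have h6 : 0 ≤ ε ^ 2 * V - W := nonneg_of_mul_nonneg_right ?_ h4
    · linarith
    · linarith [h5]

theorem assumptionA_iff_reflected_averaged {d : ℕ}
    (H : EuclideanSpace ℝ (Fin d) → EuclideanSpace ℝ (Fin d))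
    (ε : ℝ) (hε : 0 ≤ ε) :
    (∀ x y, ‖(H x - x) - (H y - y)‖ ^ 2 ≤ ε ^ 2 * ‖x - y‖ ^ 2) ↔
      Averaged (2 * ε / (1 + 2 * ε)) (fun x => (1 / (1 + 2 * ε)) • (2 • H x - x)) := by
  have hc : (0:ℝ) < 1 + 2 * ε := by linarith
  unfold Averaged
  apply forall₂_congr
  intro x y
  have hG : (1 / (1 + 2 * ε)) • (2 • H x - x) - (1 / (1 + 2 * ε)) • (2 • H y - y)
      = (1 / (1 + 2 * ε)) • ((2:ℝ) • ((H x - x) - (H y - y)) + (x - y)) := by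
    module
  simp only [hG]
  exact aux_iff ε hc _ _
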